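/- Let X be a locally compact, Hausdorff, connected space, let f ∈ C₀(X) and let ε > 0. Then there exists h ∈ C_c(X) such that h belongs to the smallest closed subalgebra of C₀(X) containing f and ‖f − h‖_∞ ≤ ε. -/

import Mathlib

open Set Filter Topology MeasureTheory
open scoped ENNReal BoundedContinuousFunction

universe u

/-- A topological measure on `X`: a set function on subsets of `X` (only its values on open
and closed sets matter), not identically `∞` on open/closed sets, satisfying (TM1)–(TM3). -/
structure TopMeasure (X : Type u) [TopologicalSpace X] where
  toFun : Set X → ℝ≥0∞
  not_all_top : ∃ A : Set X, (IsOpen A ∨ IsClosed A) ∧ toFun A ≠ ∞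
  tm1 : ∀ A B : Set X, Disjoint A B → (IsOpen A ∨ IsCompact A) → (IsOpen B ∨ IsCompact B) →
      (IsOpen (A ∪ B) ∨ IsCompact (A ∪ B)) → toFun (A ∪ B) = toFun A + toFun B
  tm2 : ∀ U : Set X, IsOpen U → toFun U = ⨆ K ∈ {K : Set X | IsCompact K ∧ K ⊆ U}, toFun K
  tm3 : ∀ F : Set X, IsClosed F → toFun F = ⨅ U ∈ {U : Set X | IsOpen U ∧ F ⊆ U}, toFun U

/-- `μ` is compact-finite. -/
def TopMeasure.CompactFinite {X : Type u} [TopologicalSpace X] (μ : TopMeasure X) : Prop :=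
  ∀ K : Set X, IsCompact K → μ.toFun K ≠ ∞

/-- The set of compactly supported continuous functions, inside `C_b(X)`. -/
def CcS (X : Type u) [TopologicalSpace X] : Set (X →ᵇ ℝ) :=
  {f | HasCompactSupport (f : X → ℝ)}

/-- The set of continuous functions vanishing at infinity, inside `C_b(X)`. -/
def C0S (X : Type u) [TopologicalSpace X] : Set (X →ᵇ ℝ) :=
  {f | Tendsto (f : X → ℝ) (cocompact X) (nhds 0)}

/-- `𝔅` is a (non-unital) subalgebra of `C_b(X)`. -/
def IsSubalgS {X : Type u} [TopologicalSpace X] (𝔅 : Set (X →ᵇ ℝ)) : Prop :=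
  (∀ f g : X →ᵇ ℝ, f ∈ 𝔅 → g ∈ 𝔅 → f + g ∈ 𝔅) ∧
  (∀ f g : X →ᵇ ℝ, f ∈ 𝔅 → g ∈ 𝔅 → f * g ∈ 𝔅) ∧
  (∀ (c : ℝ) (f : X →ᵇ ℝ), f ∈ 𝔅 → c • f ∈ 𝔅)

/-- The singly generated subalgebra `B(h)`: the smallest closed (in `𝔅`) subalgebra of `𝔅`
containing `h`. -/
def sgen {X : Type u} [TopologicalSpace X] (𝔅 : Set (X →ᵇ ℝ)) (h : X →ᵇ ℝ) :
    Set (X →ᵇ ℝ) :=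
  ⋂₀ {S : Set (X →ᵇ ℝ) | S ⊆ 𝔅 ∧ h ∈ S ∧
      (∀ f g : X →ᵇ ℝ, f ∈ S → g ∈ S → f + g ∈ S) ∧
      (∀ f g : X →ᵇ ℝ, f ∈ S → g ∈ S → f * g ∈ S) ∧
      (∀ (c : ℝ) (f : X →ᵇ ℝ), f ∈ S → c • f ∈ S) ∧
      IsClosed {x : ↥𝔅 | (x : X →ᵇ ℝ) ∈ S}}

/-- A signed quasi-linear functional on `𝔅` (QI1), (QI2). -/
structure SignedQLF {X : Type u} [TopologicalSpace X] (𝔅 : Set (X →ᵇ ℝ)) where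
  toFun : (X →ᵇ ℝ) → ℝ
  smul_eq : ∀ (a : ℝ) (f : X →ᵇ ℝ), f ∈ 𝔅 → toFun (a • f) = a * toFun f
  add_eq : ∀ h ∈ 𝔅, ∀ f g : X →ᵇ ℝ, f ∈ sgen 𝔅 h → g ∈ sgen 𝔅 h →
      toFun (f + g) = toFun f + toFun g

/-- A (positive) quasi-linear functional on `𝔅` (QI1)–(QI3). -/
structure QLF {X : Type u} [TopologicalSpace X] (𝔅 : Set (X →ᵇ ℝ)) extends SignedQLF 𝔅 where
  pos : ∀ f : X →ᵇ ℝ, f ∈ 𝔅 → 0 ≤ f → 0 ≤ toFun f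

/-- `‖ρ‖ = sup {ρ(f) : f ∈ 𝔅, 0 ≤ f ≤ 1}`, as an extended real number. -/
noncomputable def qnorm {X : Type u} [TopologicalSpace X] {𝔅 : Set (X →ᵇ ℝ)} (ρ : QLF 𝔅) :
    ℝ≥0∞ :=
  ⨆ f ∈ {f : X →ᵇ ℝ | f ∈ 𝔅 ∧ 0 ≤ f ∧ f ≤ 1}, ENNReal.ofReal (ρ.toFun f)

/-- `m` is the measure `m_f` on `ℝ` associated with a finite topological measure `μ` and
`f ∈ C₀(X)` (case (A)): `m(W) = μ(f⁻¹(W))` for every open `W ⊆ ℝ`. -/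
def IsMfA {X : Type u} [TopologicalSpace X] (μ : TopMeasure X) (f : X →ᵇ ℝ)
    (m : Measure ℝ) : Prop :=
  ∀ W : Set ℝ, IsOpen W → m W = μ.toFun ((f : X → ℝ) ⁻¹' W)

/-- `m` is the measure `m_f` on `ℝ` associated with a compact-finite topological measure `μ`
and `f ∈ C_c(X)` (case (B)): `m(W) = μ(f⁻¹(W \ {0}))` for every open `W ⊆ ℝ`. -/
def IsMfB {X : Type u} [TopologicalSpace X] (μ : TopMeasure X) (f : X →ᵇ ℝ)
    (m : Measure ℝ) : Prop :=
  ∀ W : Set ℝ, IsOpen W → m W = μ.toFun ((f : X → ℝ) ⁻¹' (W \ {0}))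

/-- The support of a (Borel) measure on `ℝ`. -/
def msupp (m : Measure ℝ) : Set ℝ := {x : ℝ | ∀ U ∈ nhds x, 0 < m U}

/-- The set function `μ_ρ` on open sets:
`μ_ρ(U) = sup {ρ(f) : f ∈ C_c(X), 0 ≤ f ≤ 1, supp f ⊆ U}`. -/
noncomputable def muO {X : Type u} [TopologicalSpace X] {𝔅 : Set (X →ᵇ ℝ)} (ρ : QLF 𝔅)
    (U : Set X) : ℝ≥0∞ :=
  ⨆ f ∈ {f : X →ᵇ ℝ | f ∈ CcS X ∧ 0 ≤ f ∧ f ≤ 1 ∧ tsupport (f : X → ℝ) ⊆ U},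
    ENNReal.ofReal (ρ.toFun f)

/-- The set function `μ_ρ` on closed sets: `μ_ρ(F) = inf {μ_ρ(U) : U open, F ⊆ U}`. -/
noncomputable def muC {X : Type u} [TopologicalSpace X] {𝔅 : Set (X →ᵇ ℝ)} (ρ : QLF 𝔅)
    (F : Set X) : ℝ≥0∞ :=
  ⨅ U ∈ {U : Set X | IsOpen U ∧ F ⊆ U}, muO ρ U

open Classical in
/-- The set function `μ_ρ`. -/
noncomputable def muR {X : Type u} [TopologicalSpace X] {𝔅 : Set (X →ᵇ ℝ)} (ρ : QLF 𝔅) :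
    Set X → ℝ≥0∞ :=
  fun A => if IsOpen A then muO ρ A else muC ρ A

/-- `ρ = ρ_μ` on `C₀(X)` (case (A)): for every `f ∈ C₀(X)` and every measure `m_f`
associated with `μ` and `f`, `ρ(f) = ∫_ℝ id dm_f`. -/
def ReprA {X : Type u} [TopologicalSpace X] {𝔅 : Set (X →ᵇ ℝ)} (μ : TopMeasure X)
    (ρ : QLF 𝔅) : Prop :=
  ∀ f ∈ C0S X, ∀ m : Measure ℝ, IsMfA μ f m → ρ.toFun f = ∫ t, t ∂m

/-- `ρ = ρ_μ` on `C_c(X)` (case (B)). -/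
def ReprB {X : Type u} [TopologicalSpace X] {𝔅 : Set (X →ᵇ ℝ)} (μ : TopMeasure X)
    (ρ : QLF 𝔅) : Prop :=
  ∀ f ∈ CcS X, ∀ m : Measure ℝ, IsMfB μ f m → ρ.toFun f = ∫ t, t ∂m

open Polynomial in
lemma aeval_bcf_apply {X : Type u} [TopologicalSpace X] (f : X →ᵇ ℝ) (p : ℝ[X]) (x : X) :
    (Polynomial.aeval f p) x = p.eval (f x) := by
  induction p using Polynomial.induction_on with
  | C a => simp [Polynomial.aeval_C]
  | add p q hp hq => simp [hp, hq]
  | monomial n a h => simp_all [pow_succ, mul_assoc]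

open Polynomial in
lemma aeval_mem_aux {X : Type u} [TopologicalSpace X] (f : X →ᵇ ℝ) (S : Set (X →ᵇ ℝ))
    (hfS : f ∈ S)
    (hadd : ∀ g g' : X →ᵇ ℝ, g ∈ S → g' ∈ S → g + g' ∈ S)
    (hmul : ∀ g g' : X →ᵇ ℝ, g ∈ S → g' ∈ S → g * g' ∈ S)
    (hsmul : ∀ (c : ℝ) (g : X →ᵇ ℝ), g ∈ S → c • g ∈ S) :
    ∀ (n : ℕ) (p : ℝ[X]), p.natDegree ≤ n → p.coeff 0 = 0 → Polynomial.aeval f p ∈ S := by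
  have h0S : (0 : X →ᵇ ℝ) ∈ S := by simpa using hsmul 0 f hfS
  intro n
  induction n with
  | zero =>
    intro p hdeg h0
    have hp : p = C (p.coeff 0) := Polynomial.eq_C_of_natDegree_le_zero hdeg
    rw [hp, h0]
    simpa using h0S
  | succ n ih =>
    intro p hdeg h0
    set q := p.divX with hq
    have hpq : p = q * Polynomial.X := by
      have := Polynomial.divX_mul_X_add p
      rw [h0] at this
      simpa using this.symm
    set c := q.coeff 0 with hc
    set q' := q - C c with hq'
    have hq'0 : q'.coeff 0 = 0 := by simp [hq', hc]
    have hq'deg : q'.natDegree ≤ n := by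
      have h1 : q'.natDegree = q.natDegree := Polynomial.natDegree_sub_C
      have h2 : q.natDegree = p.natDegree - 1 := Polynomial.natDegree_divX_eq_natDegree_tsub_one
      omega
    have hmem : Polynomial.aeval f q' ∈ S := ih q' hq'deg hq'0
    have key : Polynomial.aeval f p = (Polynomial.aeval f q') * f + c • f := by
      have hqd : q = q' + C c := by ring
      ext x
      have hev : p.eval (f x) = (q'.eval (f x) + c) * f x := by
        conv_lhs => rw [hpq, hqd]
        simp
      simp [aeval_bcf_apply, hev, add_mul]
    rw [key]
    exact hadd _ _ (hmul _ _ hmem hfS) (hsmul c f hfS)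

/-- every `f ∈ C₀(X)` can be approximated within `ε` by some `h ∈ C_c(X)`
belonging to the smallest closed subalgebra of `C₀(X)` containing `f`. -/
theorem exists_compactSupport_approx_in_sgen {X : Type u} [TopologicalSpace X]
    [LocallyCompactSpace X] [T2Space X] [ConnectedSpace X]
    (f : X →ᵇ ℝ) (hf : f ∈ C0S X) (ε : ℝ) (hε : 0 < ε) :
    ∃ h : X →ᵇ ℝ, h ∈ CcS X ∧ h ∈ sgen (C0S X) f ∧ ‖f - h‖ ≤ ε := by
  classical
  set φ : ℝ → ℝ := fun t => t - max (-ε) (min ε t) with hφ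
  have hφcont : Continuous φ := by fun_prop
  have hclamp : ∀ t : ℝ, |max (-ε) (min ε t)| ≤ ε := by
    intro t
    rw [abs_le]
    constructor
    · exact le_max_left _ _
    · exact max_le (by linarith) (min_le_left _ _)
  have hφ0 : ∀ t : ℝ, |t| ≤ ε → φ t = 0 := by
    intro t ht
    rw [abs_le] at ht
    simp only [hφ]
    rw [min_eq_right ht.2, max_eq_right ht.1, sub_self]
  have hφzero : φ 0 = 0 := hφ0 0 (by simpa using hε.le)
  have hbd : ∀ x : X, ‖φ (f x)‖ ≤ ‖f‖ + ε := by
    intro x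
    have h1 : |f x| ≤ ‖f‖ := f.norm_coe_le_norm x
    have h2 := hclamp (f x)
    calc ‖φ (f x)‖ = |f x - max (-ε) (min ε (f x))| := rfl
      _ ≤ |f x| + |max (-ε) (min ε (f x))| := abs_sub _ _
      _ ≤ ‖f‖ + ε := add_le_add h1 h2
  set h : X →ᵇ ℝ := BoundedContinuousFunction.ofNormedAddCommGroup (fun x => φ (f x))
      (hφcont.comp f.continuous) (‖f‖ + ε) hbd with hh
  have hcoe : ∀ x, h x = φ (f x) := fun x => rfl
  -- h ∈ C0S X
  have hC0 : h ∈ C0S X := by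
    have : Tendsto φ (nhds 0) (nhds 0) := by
      have := hφcont.tendsto 0
      rwa [hφzero] at this
    exact this.comp hf
  -- compact support
  obtain ⟨K, hK, hKc⟩ := mem_cocompact.mp (hf.eventually (Metric.ball_mem_nhds 0 hε))
  have hsupp : tsupport (h : X → ℝ) ⊆ K := by
    have hcl : IsClosed {x : X | ε ≤ |f x|} :=
      isClosed_le continuous_const (f.continuous.abs)
    have h1 : Function.support (h : X → ℝ) ⊆ {x : X | ε ≤ |f x|} := by
      intro x hx
      by_contra hcon
      simp only [Set.mem_setOf_eq, not_le] at hcon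
      exact hx (by rw [hcoe]; exact hφ0 _ hcon.le)
    have h2 : tsupport (h : X → ℝ) ⊆ {x : X | ε ≤ |f x|} := closure_minimal h1 hcl
    intro x hx
    by_contra hxK
    have : f x ∈ Metric.ball (0 : ℝ) ε := hKc hxK
    have hlt : |f x| < ε := by simpa [Real.dist_eq] using this
    exact absurd (h2 hx) (not_le.mpr hlt)
  have hCc : h ∈ CcS X := hK.of_isClosed_subset (isClosed_tsupport _) hsupp
  refine ⟨h, hCc, ?_, ?_⟩
  · -- h ∈ sgen
    intro S hS
    obtain ⟨hsub, hfS, hadd, hmul, hsmul, hclosed⟩ := hS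
    change h ∈ S
    have key : (⟨h, hC0⟩ : ↥(C0S X)) ∈ {x : ↥(C0S X) | (x : X →ᵇ ℝ) ∈ S} := by
      rw [← hclosed.closure_eq, Metric.mem_closure_iff]
      intro δ hδ
      obtain ⟨p, hp⟩ := exists_polynomial_near_of_continuousOn (-‖f‖) ‖f‖ φ
        hφcont.continuousOn (δ/3) (by linarith)
      have h0mem : (0 : ℝ) ∈ Set.Icc (-‖f‖) ‖f‖ := by
        constructor <;> simp [norm_nonneg]
      have hc : |p.coeff 0| < δ/3 := by
        have := hp 0 h0mem
        rwa [hφzero, sub_zero, ← Polynomial.coeff_zero_eq_eval_zero] at this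
      set q : Polynomial ℝ := p - Polynomial.C (p.coeff 0) with hq
      have hq0 : q.coeff 0 = 0 := by simp [hq]
      have hg : Polynomial.aeval f q ∈ S :=
        aeval_mem_aux f S hfS hadd hmul hsmul q.natDegree q le_rfl hq0
      refine ⟨⟨Polynomial.aeval f q, hsub hg⟩, hg, ?_⟩
      rw [Subtype.dist_eq]
      simp only
      rw [dist_eq_norm]
      have hnorm : ‖h - Polynomial.aeval f q‖ ≤ 2*δ/3 := by
        apply BoundedContinuousFunction.norm_le (by linarith) |>.mpr
        intro x
        have hx : f x ∈ Set.Icc (-‖f‖) ‖f‖ := by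
          have := abs_le.mp (f.norm_coe_le_norm x)
          exact ⟨this.1, this.2⟩
        have heval : (Polynomial.aeval f q) x = p.eval (f x) - p.coeff 0 := by
          rw [aeval_bcf_apply, hq]; simp
        have h1 : |φ (f x) - p.eval (f x)| < δ/3 := by
          have := hp (f x) hx
          rwa [abs_sub_comm] at this
        calc ‖(h - Polynomial.aeval f q) x‖
            = |φ (f x) - ((p.eval (f x)) - p.coeff 0)| := by
              rw [BoundedContinuousFunction.coe_sub]; simp [hcoe, heval]
          _ ≤ |φ (f x) - p.eval (f x)| + |p.coeff 0| := by
              have hre : φ (f x) - (p.eval (f x) - p.coeff 0)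
                  = (φ (f x) - p.eval (f x)) + p.coeff 0 := by ring
              rw [hre]
              exact abs_add_le _ _
          _ ≤ 2*δ/3 := by linarith
      linarith
    exact key
  · -- norm bound
    apply BoundedContinuousFunction.norm_le hε.le |>.mpr
    intro x
    rw [BoundedContinuousFunction.coe_sub]
    simp only [Pi.sub_apply, hcoe]
    have : f x - φ (f x) = max (-ε) (min ε (f x)) := by simp [hφ]
    rw [show ‖f x - φ (f x)‖ = |f x - φ (f x)| from rfl, this]
    exact hclamp _
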